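/- The function f₃(x) = x·√(x² + 4) − (x − 2)·√((x − 2)² + 4) is strictly increasing for x > 2. -/

import Mathlib

lemma g_hasDerivAt (t : ℝ) :
    HasDerivAt (fun t : ℝ => t * Real.sqrt (t^2 + 4))
      ((2 * t^2 + 4) / Real.sqrt (t^2 + 4)) t := by
  have hpos : (0:ℝ) < t^2 + 4 := by positivity
  have hs : 0 < Real.sqrt (t^2 + 4) := Real.sqrt_pos.mpr hpos
  have h1 : HasDerivAt (fun t : ℝ => t^2 + 4) (2 * t) t := by
    simpa using ((hasDerivAt_pow 2 t).add_const 4)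
  have h2 : HasDerivAt (fun t : ℝ => Real.sqrt (t^2 + 4))
      (1 / (2 * Real.sqrt (t^2 + 4)) * (2 * t)) t :=
    (Real.hasDerivAt_sqrt (ne_of_gt hpos)).comp t h1
  have h3 := (hasDerivAt_id t).mul h2
  have hsq : Real.sqrt (t^2 + 4) ^ 2 = t^2 + 4 := Real.sq_sqrt hpos.le
  refine h3.congr_deriv ?_
  simp only [id]
  field_simp
  nlinarith [hsq]

theorem f3_strictMonoOn :
    StrictMonoOn (fun x : ℝ =>
        x * Real.sqrt (x^2 + 4) - (x - 2) * Real.sqrt ((x - 2)^2 + 4))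
      (Set.Ioi (2 : ℝ)) := by
  have hderiv : ∀ x : ℝ, HasDerivAt (fun x : ℝ =>
      x * Real.sqrt (x^2 + 4) - (x - 2) * Real.sqrt ((x - 2)^2 + 4))
      ((2 * x^2 + 4) / Real.sqrt (x^2 + 4)
        - (2 * (x-2)^2 + 4) / Real.sqrt ((x-2)^2 + 4)) x := by
    intro x
    have h1 := g_hasDerivAt x
    have h2 := (g_hasDerivAt (x - 2)).comp x ((hasDerivAt_id x).sub_const 2)
    exact h1.sub (by simpa [Function.comp_def] using h2)
  apply strictMonoOn_of_deriv_pos (convex_Ioi 2)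
  · exact fun x _ => ((hderiv x).continuousAt).continuousWithinAt
  · intro x hx
    rw [interior_Ioi, Set.mem_Ioi] at hx
    rw [(hderiv x).deriv]
    have hpos1 : (0:ℝ) < x^2 + 4 := by positivity
    have hpos2 : (0:ℝ) < (x-2)^2 + 4 := by positivity
    have hs : 0 < Real.sqrt (x^2 + 4) := Real.sqrt_pos.mpr hpos1
    have hr : 0 < Real.sqrt ((x-2)^2 + 4) := Real.sqrt_pos.mpr hpos2
    have hsq : Real.sqrt (x^2 + 4) ^ 2 = x^2 + 4 := Real.sq_sqrt hpos1.le
    have hrq : Real.sqrt ((x-2)^2 + 4) ^ 2 = (x-2)^2 + 4 := Real.sq_sqrt hpos2.le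
    rw [sub_pos, div_lt_div_iff₀ hr hs]
    -- both sides positive; compare squares
    nlinarith [mul_pos hs hr, sq_nonneg (x - 2), sq_nonneg x,
      mul_pos (mul_pos hs hr) (mul_pos hs hr),
      sq_nonneg ((2*x^2+4) * Real.sqrt ((x-2)^2+4) - (2*(x-2)^2+4) * Real.sqrt (x^2+4)),
      sq_nonneg ((2*x^2+4) * Real.sqrt ((x-2)^2+4) + (2*(x-2)^2+4) * Real.sqrt (x^2+4))]
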